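/- For every non-reflexive Banach space X and every θ ∈ (0,1), there exist sequences (u_n) in the closed unit ball of X and (u*_n) in the closed unit ball of X* such that u*_n(u_k) = θ if n ≤ k and u*_n(u_k) = 0 if n > k. -/

import Mathlib

set_option maxHeartbeats 1000000

/-- A functional vanishing on the kernel of `T : E →ₗ ℝⁿ` is a linear combination of the
coordinates of `T`. -/
lemma james_span_of_ker_le {E : Type*} [AddCommGroup E] [Module ℝ E] {n : ℕ}
    (T : E →ₗ[ℝ] (Fin n → ℝ)) (g : E →ₗ[ℝ] ℝ) (hg : ∀ x, T x = 0 → g x = 0) :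
    ∃ a : Fin n → ℝ, ∀ x, g x = ∑ i, T x i * a i := by
  have hker : LinearMap.ker T ≤ LinearMap.ker g := fun x hx => hg x hx
  let gbar : (E ⧸ LinearMap.ker T) →ₗ[ℝ] ℝ := (LinearMap.ker T).liftQ g hker
  let e := T.quotKerEquivRange
  let h0 : (LinearMap.range T) →ₗ[ℝ] ℝ := gbar.comp e.symm.toLinearMap
  obtain ⟨h, hh⟩ := LinearMap.exists_extend h0
  refine ⟨fun i => h (Pi.single i 1), fun x => ?_⟩
  have h1 : h (T x) = g x := by
    have h2 : (⟨T x, LinearMap.mem_range_self T x⟩ : LinearMap.range T)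
        = e (Submodule.Quotient.mk x) := by
      ext
      simp [e, LinearMap.quotKerEquivRange_apply_mk]
    calc h (T x) = h0 ⟨T x, LinearMap.mem_range_self T x⟩ := by
          rw [← hh]; rfl
      _ = gbar (Submodule.Quotient.mk x) := by
          rw [h2]; simp [h0]
      _ = g x := rfl
  rw [← h1]
  have h3 : T x = ∑ i, (T x i) • (Pi.single i (1:ℝ) : Fin n → ℝ) := by
    ext j
    simp [Pi.single_apply]
  conv_lhs => rw [h3]
  rw [map_sum]
  simp [map_smul, smul_eq_mul]

/-- Helly's theorem: a finite system of linear equations with a norm bound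
admits a solution of nearly-minimal norm. -/
lemma james_helly {E : Type*} [NormedAddCommGroup E] [NormedSpace ℝ E]
    {n : ℕ} (f : Fin n → (E →L[ℝ] ℝ)) (c : Fin n → ℝ) {M ε : ℝ} (hM : 0 ≤ M) (hε : 0 < ε)
    (h : ∀ a : Fin n → ℝ, |∑ i, a i * c i| ≤ M * ‖∑ i, a i • f i‖) :
    ∃ x : E, ‖x‖ ≤ M + ε ∧ ∀ i, f i x = c i := by
  classical
  set T : E →ₗ[ℝ] (Fin n → ℝ) := LinearMap.pi (fun i => (f i : E →ₗ[ℝ] ℝ)) with hT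
  have hTapp : ∀ x i, T x i = f i x := fun x i => rfl
  -- the system is consistent
  have hc : c ∈ LinearMap.range T := by
    by_contra hcr
    obtain ⟨g, hg1, hg2⟩ :=
      Submodule.exists_dual_map_eq_bot_of_notMem (p := LinearMap.range T) hcr inferInstance
    set a : Fin n → ℝ := fun i => g (Pi.single i 1) with ha
    have hgy : ∀ y : Fin n → ℝ, g y = ∑ i, y i * a i := by
      intro y
      have h3 : y = ∑ i, (y i) • (Pi.single i (1:ℝ) : Fin n → ℝ) := by
        ext j; simp [Pi.single_apply]
      conv_lhs => rw [h3]
      rw [map_sum]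
      simp [ha, smul_eq_mul]
    have hzero : (∑ i, a i • f i) = 0 := by
      ext x
      have hx0 : g (T x) = 0 := by
        have : g (T x) ∈ Submodule.map g (LinearMap.range T) :=
          Submodule.mem_map_of_mem (LinearMap.mem_range_self T x)
        rw [hg2] at this
        simpa using this
      rw [hgy (T x)] at hx0
      simp only [ContinuousLinearMap.coe_sum', ContinuousLinearMap.coe_smul',
        Finset.sum_apply, Pi.smul_apply, smul_eq_mul, ContinuousLinearMap.zero_apply]
      rw [← hx0]
      exact Finset.sum_congr rfl fun i _ => by rw [hTapp, mul_comm]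
    have hha := h a
    rw [hzero] at hha
    simp only [norm_zero, mul_zero, abs_nonpos_iff] at hha
    apply hg1
    rw [hgy c, ← hha]
    exact Finset.sum_congr rfl fun i _ => mul_comm _ _
  obtain ⟨x₀, hx₀⟩ := hc
  have hMε : 0 < M + ε := by linarith
  by_contra hcon
  push_neg at hcon
  set V : Set E := {x | ∀ i, f i x = c i} with hV
  have hx₀V : x₀ ∈ V := fun i => by rw [← hTapp, hx₀]
  have hVconv : Convex ℝ V := by
    intro x hx y hy a b ha hb hab
    intro i
    have : f i (a • x + b • y) = a * c i + b * c i := by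
      simp [hx i, hy i]
    rw [this, ← add_mul, hab, one_mul]
  have hdisj : Disjoint (Metric.ball (0:E) (M+ε)) V := by
    rw [Set.disjoint_left]
    intro x hx hxV
    obtain ⟨i, hi⟩ := hcon x (le_of_lt (by rwa [mem_ball_zero_iff] at hx))
    exact hi (hxV i)
  obtain ⟨g, u, h1, h2⟩ :=
    geometric_hahn_banach_open (convex_ball (0:E) (M+ε)) Metric.isOpen_ball hVconv hdisj
  have hu : 0 < u := by
    have := h1 0 (by simpa [Metric.mem_ball] using hMε)
    simpa using this
  -- g vanishes on the kernel of T
  have hker : ∀ k, T k = 0 → g k = 0 := by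
    intro k hk
    by_contra hgk
    have hmem : ∀ t : ℝ, (x₀ + t • k) ∈ V := by
      intro t i
      have hfik : f i k = 0 := by rw [← hTapp, hk]; rfl
      have : f i (x₀ + t • k) = c i + t * 0 := by
        simp [hx₀V i, hfik]
      simpa using this
    have hle := h2 _ (hmem ((u - 1 - g x₀)/(g k)))
    rw [map_add, map_smul, smul_eq_mul, div_mul_cancel₀ _ hgk] at hle
    linarith
  obtain ⟨a, hag⟩ := james_span_of_ker_le T (g : E →ₗ[ℝ] ℝ) hker
  have hgsum : (∑ i, a i • f i) = g := by
    ext x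
    simp only [ContinuousLinearMap.coe_sum', ContinuousLinearMap.coe_smul',
      Finset.sum_apply, Pi.smul_apply, smul_eq_mul]
    rw [show g x = ∑ i, T x i * a i from hag x]
    exact Finset.sum_congr rfl fun i _ => by rw [hTapp, mul_comm]
  -- the sup of g on the ball is at most u
  have key : ∀ x : E, ‖x‖ ≤ M + ε → g x ≤ u := by
    intro x hx
    by_contra hgx
    push_neg at hgx
    have hgx0 : 0 < g x := lt_trans hu hgx
    set t := (u + g x)/(2 * g x) with htdef
    have ht0 : 0 < t := by positivity
    have ht1 : t < 1 := by rw [div_lt_one (by positivity)]; linarith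
    have hb : g (t • x) < u := by
      apply h1
      rw [mem_ball_zero_iff, norm_smul, Real.norm_eq_abs, abs_of_pos ht0]
      calc t * ‖x‖ ≤ t * (M + ε) := by nlinarith
        _ < 1 * (M + ε) := by nlinarith
        _ = M + ε := one_mul _
    rw [map_smul, smul_eq_mul, htdef] at hb
    rw [show (u + g x) / (2 * g x) * g x = (u + g x)/2 from by
      field_simp] at hb
    linarith
  have hgnorm : ‖g‖ ≤ u / (M + ε) := by
    have hone : ∀ x : E, g x ≤ u / (M + ε) * ‖x‖ := by
      intro x
      rcases eq_or_ne x 0 with rfl | hx0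
      · simp
      · have hxpos : 0 < ‖x‖ := norm_pos_iff.2 hx0
        have hz := key (((M+ε)/‖x‖) • x)
          (by rw [norm_smul, Real.norm_eq_abs, abs_of_pos (by positivity),
                div_mul_cancel₀ _ (ne_of_gt hxpos)])
        rw [map_smul, smul_eq_mul, div_mul_eq_mul_div, div_le_iff₀ hxpos] at hz
        rw [div_mul_eq_mul_div, le_div_iff₀ hMε]
        nlinarith
    apply ContinuousLinearMap.opNorm_le_bound _ (div_nonneg hu.le hMε.le)
    intro x
    rw [Real.norm_eq_abs, abs_le]
    constructor
    · have := hone (-x)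
      rw [map_neg, norm_neg] at this
      linarith
    · exact hone x
  have hchain : u ≤ M * (u / (M + ε)) := by
    have e1 : u ≤ g x₀ := h2 x₀ hx₀V
    have e2 : g x₀ ≤ M * ‖g‖ := by
      have e0 : g x₀ = ∑ i, c i * a i := by
        have h5 := hag x₀
        rw [hx₀] at h5
        exact h5
      rw [e0]
      calc (∑ i, c i * a i) ≤ |∑ i, a i * c i| := by
            rw [show (∑ i, c i * a i) = ∑ i, a i * c i from
              Finset.sum_congr rfl fun i _ => mul_comm _ _]
            exact le_abs_self _
        _ ≤ M * ‖∑ i, a i • f i‖ := h a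
        _ = M * ‖g‖ := by rw [hgsum]
    have e3 : M * ‖g‖ ≤ M * (u / (M + ε)) := mul_le_mul_of_nonneg_left hgnorm hM
    linarith
  have : M * (u / (M + ε)) < u := by
    rw [mul_div_assoc']
    rw [div_lt_iff₀ hMε]
    nlinarith
  linarith
set_option maxHeartbeats 1000000

section glue

variable {α β : Type*} (G : ∀ n : ℕ, (Fin n → α) → (Fin n → β) → Prop)

/-- Iteratively extend finite sequences satisfying `G`. -/
noncomputable def jamesChain
    (h0 : G 0 (fun i => i.elim0) (fun i => i.elim0))
    (hext : ∀ n u v, G n u v → ∃ x y, G (n+1) (Fin.snoc u x) (Fin.snoc v y)) :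
    (n : ℕ) → {p : (Fin n → α) × (Fin n → β) // G n p.1 p.2}
  | 0 => ⟨(fun i => i.elim0, fun i => i.elim0), h0⟩
  | n+1 =>
    let c := jamesChain h0 hext n
    let e := hext n c.1.1 c.1.2 c.2
    ⟨(Fin.snoc c.1.1 e.choose, Fin.snoc c.1.2 e.choose_spec.choose),
      e.choose_spec.choose_spec⟩

lemma jamesChain_succ_fst
    (h0 : G 0 (fun i => i.elim0) (fun i => i.elim0))
    (hext : ∀ n u v, G n u v → ∃ x y, G (n+1) (Fin.snoc u x) (Fin.snoc v y))
    (n : ℕ) (i : Fin n) :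
    (jamesChain G h0 hext (n+1)).1.1 i.castSucc = (jamesChain G h0 hext n).1.1 i := by
  rw [jamesChain]
  simp

lemma jamesChain_succ_snd
    (h0 : G 0 (fun i => i.elim0) (fun i => i.elim0))
    (hext : ∀ n u v, G n u v → ∃ x y, G (n+1) (Fin.snoc u x) (Fin.snoc v y))
    (n : ℕ) (i : Fin n) :
    (jamesChain G h0 hext (n+1)).1.2 i.castSucc = (jamesChain G h0 hext n).1.2 i := by
  rw [jamesChain]
  simp

/-- Glue the finite sequences produced by `jamesChain` into infinite sequences. -/
lemma james_glue
    (h0 : G 0 (fun i => i.elim0) (fun i => i.elim0))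
    (hext : ∀ n u v, G n u v → ∃ x y, G (n+1) (Fin.snoc u x) (Fin.snoc v y)) :
    ∃ (u : ℕ → α) (v : ℕ → β),
      ∀ n, G n (fun i : Fin n => u i) (fun i : Fin n => v i) := by
  classical
  set C := jamesChain G h0 hext with hC
  refine ⟨fun m => (C (m+1)).1.1 (Fin.last m), fun m => (C (m+1)).1.2 (Fin.last m), ?_⟩
  have hrestr : ∀ n (i : Fin n),
      (C n).1.1 i = (C (i.1+1)).1.1 (Fin.last i.1) ∧
      (C n).1.2 i = (C (i.1+1)).1.2 (Fin.last i.1) := by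
    intro n
    induction n with
    | zero => exact fun i => i.elim0
    | succ n ih =>
      intro i
      refine Fin.lastCases ?_ ?_ i
      · exact ⟨rfl, rfl⟩
      · intro j
        rw [jamesChain_succ_fst, jamesChain_succ_snd]
        exact ih j
  intro n
  have h1 : (fun i : Fin n => (C (i.1+1)).1.1 (Fin.last i.1)) = (C n).1.1 := by
    funext i
    exact ((hrestr n i).1).symm
  have h2 : (fun i : Fin n => (C (i.1+1)).1.2 (Fin.last i.1)) = (C n).1.2 := by
    funext i
    exact ((hrestr n i).2).symm
  rw [h1, h2]
  exact (C n).2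

end glue
set_option maxHeartbeats 1000000

open NormedSpace

/-- Step lemma: produce the next dual functional. -/
lemma james_step_phi {X : Type*} [NormedAddCommGroup X] [NormedSpace ℝ X]
    (F : StrongDual ℝ (StrongDual ℝ X)) (θ θ' : ℝ) (hθ0 : 0 < θ) (hθ' : θ < θ')
    (hdist : ∀ y : X, θ' ≤ ‖F - inclusionInDoubleDual ℝ X y‖)
    {n : ℕ} (u : Fin n → X) :
    ∃ ψ : StrongDual ℝ X, ‖ψ‖ ≤ 1 ∧ F ψ = θ ∧ ∀ j, ψ (u j) = 0 := by
  have hθ'0 : 0 < θ' := lt_trans hθ0 hθ'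
  set J := inclusionInDoubleDual ℝ X with hJ
  set f : Fin (n+1) → (StrongDual ℝ X →L[ℝ] ℝ) := Fin.cons F (fun j => J (u j)) with hf
  set c : Fin (n+1) → ℝ := Fin.cons θ 0 with hcd
  have hM : (0:ℝ) ≤ θ/θ' := div_nonneg hθ0.le hθ'0.le
  have hε : (0:ℝ) < 1 - θ/θ' := by
    have : θ/θ' < 1 := (div_lt_one hθ'0).2 hθ'
    linarith
  have hcond : ∀ a : Fin (n+1) → ℝ,
      |∑ i, a i * c i| ≤ (θ/θ') * ‖∑ i, a i • f i‖ := by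
    intro a
    have hsumc : (∑ i, a i * c i) = a 0 * θ := by
      rw [Fin.sum_univ_succ]
      simp [hcd]
    have hsumf : (∑ i, a i • f i) = a 0 • F + ∑ j : Fin n, a j.succ • J (u j) := by
      rw [Fin.sum_univ_succ]
      simp [hf]
    rw [hsumc, hsumf]
    rcases eq_or_ne (a 0) 0 with h0 | h0
    · rw [h0]
      simp only [zero_mul, abs_zero]
      positivity
    · set S : StrongDual ℝ (StrongDual ℝ X) := ∑ j : Fin n, a j.succ • J (u j) with hS
      set y : X := -(a 0)⁻¹ • (∑ j : Fin n, a j.succ • u j) with hy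
      have hJy : J y = -(a 0)⁻¹ • S := by
        rw [hy, map_smul, hS]
        congr 1
        rw [map_sum]
        exact Finset.sum_congr rfl fun j _ => by rw [map_smul]
      have hkey : a 0 • (F - J y) = a 0 • F + S := by
        rw [hJy]; match_scalars <;> field_simp
      have hnorm : ‖a 0 • F + S‖ = |a 0| * ‖F - J y‖ := by
        rw [← hkey, ← Real.norm_eq_abs]; exact @norm_smul _ _ _ _ _ NormedSpace.toNormSMulClass (a 0) (F - J y)
      rw [hnorm]
      have hd := hdist y
      rw [abs_mul, abs_of_pos hθ0]
      have h1 : |a 0| * θ' ≤ |a 0| * ‖F - J y‖ :=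
        mul_le_mul_of_nonneg_left hd (abs_nonneg _)
      have h2 : (θ/θ') * (|a 0| * θ') = |a 0| * θ := by
        field_simp
      nlinarith [abs_nonneg (a 0)]
  obtain ⟨ψ, hψ1, hψ2⟩ := james_helly f c hM hε hcond
  refine ⟨ψ, ?_, ?_, ?_⟩
  · have := hψ1
    linarith
  · have := hψ2 0
    simpa [hf, hcd] using this
  · intro j
    have := hψ2 j.succ
    simpa [hf, hcd, hJ, NormedSpace.dual_def] using this

/-- Step lemma: produce the next vector. -/
lemma james_step_u {X : Type*} [NormedAddCommGroup X] [NormedSpace ℝ X]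
    (F : StrongDual ℝ (StrongDual ℝ X)) (s θ : ℝ) (hs0 : 0 ≤ s) (hs1 : s < 1)
    (hF : ‖F‖ ≤ s)
    {n : ℕ} (φ : Fin n → StrongDual ℝ X) (hφF : ∀ i, F (φ i) = θ) :
    ∃ x : X, ‖x‖ ≤ 1 ∧ ∀ i, φ i x = θ := by
  have hε : (0:ℝ) < 1 - s := by linarith
  have hcond : ∀ a : Fin n → ℝ,
      |∑ i, a i * (fun _ : Fin n => θ) i| ≤ s * ‖∑ i, a i • φ i‖ := by
    intro a
    have h1 : (∑ i, a i * θ) = F (∑ i, a i • φ i) := by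
      rw [map_sum]
      exact Finset.sum_congr rfl fun i _ => by
        rw [map_smul, smul_eq_mul, hφF i]
    simp only
    rw [h1, ← Real.norm_eq_abs]
    calc ‖F (∑ i, a i • φ i)‖ ≤ ‖F‖ * ‖∑ i, a i • φ i‖ :=
          F.le_opNorm _
      _ ≤ s * ‖∑ i, a i • φ i‖ :=
          mul_le_mul_of_nonneg_right hF (norm_nonneg _)
  obtain ⟨x, hx1, hx2⟩ := james_helly φ (fun _ => θ) hs0 hε hcond
  exact ⟨x, by linarith, hx2⟩
set_option maxHeartbeats 1000000

/-- James's characterization: in a non-reflexive Banach space, for every θ ∈ (0,1) there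
are sequences (u_n) in the unit ball and (u*_n) in the dual unit ball with
u*_n(u_k) = θ for n ≤ k and u*_n(u_k) = 0 for n > k. -/
theorem james_nonreflexive_sequences
    (X : Type*) [NormedAddCommGroup X] [NormedSpace ℝ X] [CompleteSpace X]
    (hnr : ¬ Function.Surjective ⇑(NormedSpace.inclusionInDoubleDual ℝ X))
    (θ : ℝ) (hθ0 : 0 < θ) (hθ1 : θ < 1) :
    ∃ (u : ℕ → X) (φ : ℕ → StrongDual ℝ X),
      (∀ n, ‖u n‖ ≤ 1) ∧ (∀ n, ‖φ n‖ ≤ 1) ∧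
      (∀ n k, n ≤ k → φ n (u k) = θ) ∧ (∀ n k, k < n → φ n (u k) = 0) := by
  classical
  set J := NormedSpace.inclusionInDoubleDual ℝ X with hJdef
  set s : ℝ := (1+θ)/2 with hsdef
  set θ' : ℝ := (θ + s)/2 with hθ'def
  have hs0 : 0 < s := by rw [hsdef]; linarith
  have hs1 : s < 1 := by rw [hsdef]; linarith
  have hθθ' : θ < θ' := by rw [hθ'def, hsdef]; linarith
  have hθ's : θ' < s := by rw [hθ'def]; linarith
  have hθ'0 : 0 < θ' := lt_trans hθ0 hθθ'
  have hiso : Isometry ⇑J := (NormedSpace.inclusionInDoubleDualLi ℝ (E := X)).isometry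
  have hclosed : IsClosed ((LinearMap.range (J : X →ₗ[ℝ] StrongDual ℝ (StrongDual ℝ X)) :
      Submodule ℝ (StrongDual ℝ (StrongDual ℝ X))) :
      Set (StrongDual ℝ (StrongDual ℝ X))) := by
    rw [LinearMap.coe_range]
    exact hiso.isClosedEmbedding.isClosed_range
  have hex : ∃ G0, G0 ∉ LinearMap.range (J : X →ₗ[ℝ] StrongDual ℝ (StrongDual ℝ X)) := by
    by_contra hno
    push_neg at hno
    exact hnr fun y => LinearMap.mem_range.1 (hno y)
  obtain ⟨x₁, hx₁R, hriesz⟩ :=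
    riesz_lemma (𝕜 := ℝ) (E := StrongDual ℝ (StrongDual ℝ X)) hclosed hex (show θ'/s < 1 from (div_lt_one hs0).2 hθ's)
  have hx₁0 : x₁ ≠ 0 := fun h => hx₁R (h ▸ Submodule.zero_mem _)
  have hx₁ne : ‖x₁‖ ≠ 0 := fun h' => hx₁0 ((ContinuousLinearMap.opNorm_zero_iff x₁).mp h')
  have hx₁n : 0 < ‖x₁‖ := lt_of_le_of_ne (ContinuousLinearMap.opNorm_nonneg x₁) (Ne.symm hx₁ne)
  set F := (s/‖x₁‖) • x₁ with hFdef
  have hFnorm : ‖F‖ = s := by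
    rw [hFdef, show ‖(s/‖x₁‖) • x₁‖ = ‖s/‖x₁‖‖ * ‖x₁‖ from
      @norm_smul _ _ _ _ _ NormedSpace.toNormSMulClass (s/‖x₁‖) x₁, Real.norm_eq_abs, abs_of_pos (by positivity),
      div_mul_cancel₀ _ (ne_of_gt hx₁n)]
  have hdist : ∀ y : X, θ' ≤ ‖F - J y‖ := by
    intro y
    have hz : J ((‖x₁‖/s) • y) ∈ LinearMap.range (J : X →ₗ[ℝ] StrongDual ℝ (StrongDual ℝ X)) := LinearMap.mem_range_self _ _
    have hb := hriesz _ hz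
    have hcomp : F - J y = (s/‖x₁‖) • (x₁ - J ((‖x₁‖/s) • y)) := by
      rw [map_smul, hFdef]; match_scalars <;> field_simp
    rw [hcomp, show ‖(s/‖x₁‖) • (x₁ - J ((‖x₁‖/s) • y))‖ = ‖s/‖x₁‖‖ * ‖x₁ - J ((‖x₁‖/s) • y)‖ from
      @norm_smul _ _ _ _ _ NormedSpace.toNormSMulClass (s/‖x₁‖) (x₁ - J ((‖x₁‖/s) • y)), Real.norm_eq_abs, abs_of_pos (by positivity)]
    calc θ' = (s/‖x₁‖) * ((θ'/s) * ‖x₁‖) := by field_simp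
      _ ≤ (s/‖x₁‖) * ‖x₁ - J ((‖x₁‖/s) • y)‖ :=
          mul_le_mul_of_nonneg_left hb (by positivity)
  have h0 : (fun (n : ℕ) (u : Fin n → X) (φ : Fin n → StrongDual ℝ X) =>
      (∀ i, ‖u i‖ ≤ 1) ∧ (∀ i, ‖φ i‖ ≤ 1) ∧ (∀ i, F (φ i) = θ) ∧
      (∀ (i j : Fin n), (i:ℕ) ≤ (j:ℕ) → φ i (u j) = θ) ∧
      (∀ (i j : Fin n), (j:ℕ) < (i:ℕ) → φ i (u j) = 0))
      0 (fun i => i.elim0) (fun i => i.elim0) :=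
    ⟨fun i => i.elim0, fun i => i.elim0, fun i => i.elim0,
      fun i => i.elim0, fun i => i.elim0⟩
  have hext : ∀ (n : ℕ) (u : Fin n → X) (φ : Fin n → StrongDual ℝ X),
      ((∀ i, ‖u i‖ ≤ 1) ∧ (∀ i, ‖φ i‖ ≤ 1) ∧ (∀ i, F (φ i) = θ) ∧
        (∀ (i j : Fin n), (i:ℕ) ≤ (j:ℕ) → φ i (u j) = θ) ∧
        (∀ (i j : Fin n), (j:ℕ) < (i:ℕ) → φ i (u j) = 0)) →
      ∃ x ψ,
      ((∀ i : Fin (n+1), ‖(Fin.snoc u x : Fin (n+1) → X) i‖ ≤ 1) ∧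
        (∀ i : Fin (n+1),
          ‖(Fin.snoc φ ψ : Fin (n+1) → StrongDual ℝ X) i‖ ≤ 1) ∧
        (∀ i : Fin (n+1),
          F ((Fin.snoc φ ψ : Fin (n+1) → StrongDual ℝ X) i) = θ) ∧
        (∀ (i j : Fin (n+1)), (i:ℕ) ≤ (j:ℕ) →
          (Fin.snoc φ ψ : Fin (n+1) → StrongDual ℝ X) i
            ((Fin.snoc u x : Fin (n+1) → X) j) = θ) ∧
        (∀ (i j : Fin (n+1)), (j:ℕ) < (i:ℕ) →
          (Fin.snoc φ ψ : Fin (n+1) → StrongDual ℝ X) i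
            ((Fin.snoc u x : Fin (n+1) → X) j) = 0)) := by
    rintro n u φ ⟨hu1, hφ1, hφF, hθeq, hzeq⟩
    obtain ⟨ψ, hψn, hψF, hψu⟩ := james_step_phi F θ θ' hθ0 hθθ' hdist u
    have hφ'F : ∀ i : Fin (n+1),
        F ((Fin.snoc φ ψ : Fin (n+1) → StrongDual ℝ X) i) = θ := by
      intro i
      rcases Fin.eq_castSucc_or_eq_last i with ⟨i₀, rfl⟩ | rfl
      · rw [Fin.snoc_castSucc]; exact hφF i₀
      · rw [Fin.snoc_last]; exact hψF
    obtain ⟨x, hxn, hxφ⟩ :=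
      james_step_u F s θ hs0.le hs1 (le_of_eq hFnorm) (Fin.snoc φ ψ) hφ'F
    refine ⟨x, ψ, ?_, ?_, hφ'F, ?_, ?_⟩
    · intro i
      rcases Fin.eq_castSucc_or_eq_last i with ⟨i₀, rfl⟩ | rfl
      · rw [Fin.snoc_castSucc]; exact hu1 i₀
      · rw [Fin.snoc_last]; exact hxn
    · intro i
      rcases Fin.eq_castSucc_or_eq_last i with ⟨i₀, rfl⟩ | rfl
      · rw [Fin.snoc_castSucc]; exact hφ1 i₀
      · rw [Fin.snoc_last]; exact hψn
    · intro i j hij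
      rcases Fin.eq_castSucc_or_eq_last j with ⟨j₀, rfl⟩ | rfl
      · rcases Fin.eq_castSucc_or_eq_last i with ⟨i₀, rfl⟩ | rfl
        · rw [Fin.snoc_castSucc, Fin.snoc_castSucc]
          exact hθeq i₀ j₀ (by simpa using hij)
        · exfalso
          have h2 := j₀.2
          simp only [Fin.coe_castSucc, Fin.val_last] at hij
          omega
      · rw [Fin.snoc_last]
        exact hxφ i
    · intro i j hij
      rcases Fin.eq_castSucc_or_eq_last j with ⟨j₀, rfl⟩ | rfl
      · rcases Fin.eq_castSucc_or_eq_last i with ⟨i₀, rfl⟩ | rfl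
        · rw [Fin.snoc_castSucc, Fin.snoc_castSucc]
          exact hzeq i₀ j₀ (by simpa using hij)
        · rw [Fin.snoc_last, Fin.snoc_castSucc]
          exact hψu j₀
      · exfalso
        have h2 := i.2
        simp only [Fin.val_last] at hij
        omega
  obtain ⟨u, φ, hGood⟩ := james_glue _ h0 hext
  refine ⟨u, φ, ?_, ?_, ?_, ?_⟩
  · intro n
    exact (hGood (n+1)).1 (Fin.last n)
  · intro n
    exact (hGood (n+1)).2.1 (Fin.last n)
  · intro n k hnk
    exact (hGood (k+1)).2.2.2.1 ⟨n, by omega⟩ ⟨k, by omega⟩ (by simpa using hnk)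
  · intro n k hkn
    exact (hGood (n+1)).2.2.2.2 ⟨n, by omega⟩ ⟨k, by omega⟩ (by simpa using hkn)
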